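/- Let Ψ be an irreducible root system with highest root ρ, and let β₁, β₂, β₃, β₄ be long roots each with ⟨βᵢ, ρ⟩ = 1 and with β₁+β₂+β₃+β₄ = 2ρ. Then exactly one of the following holds: (a) up to reordering, the roots are β, β, ρ−β, ρ−β for some root β; (b) up to reordering, the roots are β, ρ−β, γ, ρ−γ for distinct roots β, γ with β and γ orthogonal; (c) the four roots are mutually orthogonal. -/

import Mathlib

open scoped RealInnerProductSpace

/-- An irreducible (reduced, crystallographic) root system together with a base
and the highest root `ρ` with respect to that base. -/
structure BasedRootSystem (ι V : Type*) [Fintype ι]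
    [NormedAddCommGroup V] [InnerProductSpace ℝ V] where
  Ψ : Set V
  base : ι → V
  ρ : V
  finite : Ψ.Finite
  ne_zero : ∀ β ∈ Ψ, β ≠ 0
  neg_mem : ∀ β ∈ Ψ, -β ∈ Ψ
  base_mem : ∀ i, base i ∈ Ψ
  reduced : ∀ β ∈ Ψ, ∀ t : ℝ, t • β ∈ Ψ → t = 1 ∨ t = -1
  cartanInt : ∀ β ∈ Ψ, ∀ γ ∈ Ψ, ∃ n : ℤ, 2 * ⟪β, γ⟫ / ⟪γ, γ⟫ = (n : ℝ)
  reflect_mem : ∀ β ∈ Ψ, ∀ γ ∈ Ψ, β - (2 * ⟪β, γ⟫ / ⟪γ, γ⟫) • γ ∈ Ψ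
  irreducible : ∀ S₁ S₂ : Set V, (∀ β ∈ Ψ, β ∈ S₁ ∨ β ∈ S₂) →
    (∀ x ∈ S₁, ∀ y ∈ S₂, ⟪x, y⟫ = 0) → (∀ β ∈ Ψ, β ∈ S₁) ∨ (∀ β ∈ Ψ, β ∈ S₂)
  base_pos : ∀ β ∈ Ψ, (∃ c : ι → ℕ, β = ∑ i, (c i : ℝ) • base i) ∨
    (∃ c : ι → ℕ, β = -∑ i, (c i : ℝ) • base i)
  rho_mem : ρ ∈ Ψ
  rho_highest : ∀ β ∈ Ψ, ∃ c : ι → ℕ, ρ - β = ∑ i, (c i : ℝ) • base i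

namespace BasedRootSystem

variable {ι V : Type*} [Fintype ι] [NormedAddCommGroup V] [InnerProductSpace ℝ V]

/-- The Cartan pairing `⟨β, γ⟩ = 2(β,γ)/(γ,γ)`. -/
noncomputable def pair (_S : BasedRootSystem ι V) (β γ : V) : ℝ :=
  2 * ⟪β, γ⟫ / ⟪γ, γ⟫

/-- A root is long if it has the same length as the highest root. -/
def IsLong (S : BasedRootSystem ι V) (β : V) : Prop := ⟪β, β⟫ = ⟪S.ρ, S.ρ⟫

end BasedRootSystem

section
variable {ι V : Type*} [Fintype ι] [NormedAddCommGroup V] [InnerProductSpace ℝ V]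

/-- Case (a): up to reordering the roots are β, β, ρ−β, ρ−β. -/
def CaseA (S : BasedRootSystem ι V) (β : Fin 4 → V) : Prop :=
  ∃ σ : Equiv.Perm (Fin 4), ∃ γ ∈ S.Ψ,
    β (σ 0) = γ ∧ β (σ 1) = γ ∧ β (σ 2) = S.ρ - γ ∧ β (σ 3) = S.ρ - γ

/-- Case (b): up to reordering the roots are β, ρ−β, γ, ρ−γ with β ≠ γ orthogonal. -/
def CaseB (S : BasedRootSystem ι V) (β : Fin 4 → V) : Prop :=
  ∃ σ : Equiv.Perm (Fin 4), ∃ γ ∈ S.Ψ, ∃ δ ∈ S.Ψ, γ ≠ δ ∧ ⟪γ, δ⟫ = 0 ∧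
    β (σ 0) = γ ∧ β (σ 1) = S.ρ - γ ∧ β (σ 2) = δ ∧ β (σ 3) = S.ρ - δ

/-- Case (c): the four roots are mutually orthogonal. -/
def CaseC (S : BasedRootSystem ι V) (β : Fin 4 → V) : Prop :=
  ∀ i j, i ≠ j → ⟪β i, β j⟫ = 0


section Helpers
variable {V : Type*} [NormedAddCommGroup V] [InnerProductSpace ℝ V]

lemma my_inner_add_expand (b c : V) : ⟪b+c,b+c⟫ = ⟪b,b⟫ + 2*⟪b,c⟫ + ⟪c,c⟫ := by
  simp only [inner_add_left, inner_add_right, real_inner_comm c b]; ring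

lemma my_inner_sub_expand (b c : V) : ⟪b-c,b-c⟫ = ⟪b,b⟫ - 2*⟪b,c⟫ + ⟪c,c⟫ := by
  simp only [inner_sub_left, inner_sub_right, real_inner_comm c b]; ring

lemma my_inner_addsub_expand (b c r : V) : ⟪b+c-r,b+c-r⟫ =
    ⟪b,b⟫ + ⟪c,c⟫ + ⟪r,r⟫ + 2*⟪b,c⟫ - 2*⟪b,r⟫ - 2*⟪c,r⟫ := by
  simp only [inner_sub_left, inner_sub_right, inner_add_left, inner_add_right, real_inner_comm b c,
    real_inner_comm b r, real_inner_comm c r]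
  ring

lemma my_sum_eq_rho {b c r : V} (hlb : ⟪b,b⟫ = ⟪r,r⟫) (hlc : ⟪c,c⟫ = ⟪r,r⟫)
    (hbr : 2*⟪b,r⟫ = ⟪r,r⟫) (hcr : 2*⟪c,r⟫ = ⟪r,r⟫) (hbc : ⟪b,c⟫ = -(⟪r,r⟫/2)) :
    b + c = r := by
  have h0 : ⟪b+c-r, b+c-r⟫ = 0 := by
    rw [my_inner_addsub_expand, hlb, hlc, hbc]; linarith
  exact sub_eq_zero.mp (inner_self_eq_zero.mp h0)

lemma my_exists_perm (i j : Fin 4) (hij : i ≠ j) :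
    ∃ τ : Equiv.Perm (Fin 4), τ 0 = i ∧ τ 1 = j := by
  classical
  set s := Equiv.swap (0:Fin 4) i with hs
  have hs0 : s 0 = i := Equiv.swap_apply_left 0 i
  set j' := s.symm j with hj'def
  have hj' : j' ≠ 0 := by
    intro h
    apply hij
    have : j = s 0 := by rw [← h, Equiv.apply_symm_apply]
    rw [this, hs0]
  refine ⟨(Equiv.swap 1 j').trans s, ?_, ?_⟩
  · show s ((Equiv.swap 1 j') 0) = i
    rw [Equiv.swap_apply_of_ne_of_ne (by decide) (Ne.symm hj'), hs0]
  · show s ((Equiv.swap 1 j') 1) = j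
    rw [Equiv.swap_apply_left, hj'def, Equiv.apply_symm_apply]

lemma my_sum_comp (β : Fin 4 → V) (r : V) (hsum : β 0 + β 1 + β 2 + β 3 = (2:ℝ) • r)
    (τ : Equiv.Perm (Fin 4)) :
    (β ∘ τ) 0 + (β ∘ τ) 1 + (β ∘ τ) 2 + (β ∘ τ) 3 = (2:ℝ) • r := by
  have h1 : ∑ m : Fin 4, β (τ m) = ∑ m : Fin 4, β m := Equiv.sum_comp τ β
  simp only [Fin.sum_univ_four] at h1
  simpa [Function.comp] using h1.trans hsum
end Helpers

section Aux
variable {ι V : Type*} [Fintype ι] [NormedAddCommGroup V] [InnerProductSpace ℝ V]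

lemma pair_options (S : BasedRootSystem ι V) {b c : V} (hb : b ∈ S.Ψ) (hc : c ∈ S.Ψ)
    (hlb : ⟪b,b⟫ = ⟪S.ρ,S.ρ⟫) (hlc : ⟪c,c⟫ = ⟪S.ρ,S.ρ⟫)
    (hbr : 2*⟪b,S.ρ⟫ = ⟪S.ρ,S.ρ⟫) (hcr : 2*⟪c,S.ρ⟫ = ⟪S.ρ,S.ρ⟫) :
    ⟪b,c⟫ = -(⟪S.ρ,S.ρ⟫/2) ∨ ⟪b,c⟫ = 0 ∨ ⟪b,c⟫ = ⟪S.ρ,S.ρ⟫/2 ∨ b = c := by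
  set R := ⟪S.ρ,S.ρ⟫ with hRdef
  have hR : 0 < R :=
    lt_of_le_of_ne real_inner_self_nonneg
      (fun h => S.ne_zero _ S.rho_mem (inner_self_eq_zero.mp h.symm))
  obtain ⟨n, hn⟩ := S.cartanInt b hb c hc
  rw [hlc] at hn
  have hbc : ⟪b,c⟫ = n * R / 2 := by
    field_simp at hn
    linarith
  have hsq : ⟪b,c⟫ * ⟪b,c⟫ ≤ R * R := by
    have := real_inner_mul_inner_self_le b c
    rwa [hlb, hlc] at this
  have hn2 : ((-2:ℤ) ≤ n ∧ n ≤ 2) := by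
    rw [hbc] at hsq
    have h4 : (n:ℝ)*n ≤ 4 := by nlinarith [mul_pos hR hR]
    have h4' : n*n ≤ 4 := by exact_mod_cast h4
    constructor <;> nlinarith
  obtain ⟨hn2a, hn2b⟩ := hn2
  interval_cases n
  · exfalso
    have hbcv : ⟪b,c⟫ = -R := by rw [hbc]; push_cast; ring
    have h1 : b + c = 0 := by
      rw [← inner_self_eq_zero (𝕜 := ℝ), my_inner_add_expand, hlb, hlc, hbcv]; ring
    have h2 : c = -b := by
      have := eq_neg_of_add_eq_zero_right h1
      exact this
    rw [h2, inner_neg_left] at hcr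
    linarith
  · left; rw [hbc]; push_cast; ring
  · right; left; rw [hbc]; push_cast; ring
  · right; right; left; rw [hbc]; push_cast; ring
  · right; right; right
    have hbcv : ⟪b,c⟫ = R := by rw [hbc]; push_cast; ring
    have h1 : b - c = 0 := by
      rw [← inner_self_eq_zero (𝕜 := ℝ), my_inner_sub_expand, hlb, hlc, hbcv]; ring
    exact sub_eq_zero.mp h1

end Aux

section Aux2
variable {ι V : Type*} [Fintype ι] [NormedAddCommGroup V] [InnerProductSpace ℝ V]

lemma caseA_comp (S : BasedRootSystem ι V) (β : Fin 4 → V) (τ : Equiv.Perm (Fin 4))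
    (h : CaseA S (β ∘ τ)) : CaseA S β := by
  obtain ⟨σ, γ, hγ, h0, h1, h2, h3⟩ := h
  exact ⟨σ.trans τ, γ, hγ, h0, h1, h2, h3⟩

lemma caseB_comp (S : BasedRootSystem ι V) (β : Fin 4 → V) (τ : Equiv.Perm (Fin 4))
    (h : CaseB S (β ∘ τ)) : CaseB S β := by
  obtain ⟨σ, γ, hγ, δ, hδ, hne, ho, h0, h1, h2, h3⟩ := h
  exact ⟨σ.trans τ, γ, hγ, δ, hδ, hne, ho, h0, h1, h2, h3⟩

lemma A01 (S : BasedRootSystem ι V) (β : Fin 4 → V) (hβ : ∀ i, β i ∈ S.Ψ)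
    (hlong : ∀ i, S.IsLong (β i))
    (hht : ∀ i, S.pair (β i) S.ρ = 1)
    (hsum : β 0 + β 1 + β 2 + β 3 = (2 : ℝ) • S.ρ)
    (he : β 0 = β 1) : CaseA S β := by
  set R := ⟪S.ρ,S.ρ⟫ with hRdef
  have hR : 0 < R :=
    lt_of_le_of_ne real_inner_self_nonneg
      (fun h => S.ne_zero _ S.rho_mem (inner_self_eq_zero.mp h.symm))
  have hβρ : ∀ i, 2*⟪β i, S.ρ⟫ = R := by
    intro i
    have h := hht i
    unfold BasedRootSystem.pair at h
    rw [div_eq_one_iff_eq (show ⟪S.ρ,S.ρ⟫ ≠ 0 from hR.ne')] at h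
    linarith
  have hββ : ∀ i, ⟪β i, β i⟫ = R := fun i => hlong i
  have hd : ∀ i j : Fin 4, ⟪β i, β j⟫ = -(R/2) ∨ ⟪β i, β j⟫ = 0 ∨ ⟪β i, β j⟫ = R/2 ∨
      ⟪β i, β j⟫ = R := by
    intro i j
    rcases pair_options S (hβ i) (hβ j) (hββ i) (hββ j) (hβρ i) (hβρ j) with h|h|h|h
    · exact Or.inl h
    · exact Or.inr (Or.inl h)
    · exact Or.inr (Or.inr (Or.inl h))
    · exact Or.inr (Or.inr (Or.inr (by rw [h]; exact hββ j)))
  have hrow : ∀ v : V, ⟪β 0, v⟫ + ⟪β 1, v⟫ + ⟪β 2, v⟫ + ⟪β 3, v⟫ = 2*⟪S.ρ, v⟫ := by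
    intro v
    have h := congrArg (fun w => (inner ℝ w v : ℝ)) hsum
    simpa [inner_add_left, real_inner_smul_left] using h
  have row := hrow (β 0)
  have h10 : ⟪β 1, β 0⟫ = R := by rw [← he]; exact hββ 0
  have hρ0 : ⟪S.ρ, β 0⟫ = R/2 := by rw [real_inner_comm]; linarith [hβρ 0]
  have h00 := hββ 0
  have key : ⟪β 2, β 0⟫ = -(R/2) ∧ ⟪β 3, β 0⟫ = -(R/2) := by
    rcases hd 2 0 with h2|h2|h2|h2 <;> rcases hd 3 0 with h3|h3|h3|h3 <;>
      first
        | exact ⟨h2, h3⟩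
        | (exfalso; linarith)
  have hb2 : β 2 = S.ρ - β 0 :=
    eq_sub_of_add_eq (my_sum_eq_rho (hββ 2) (hββ 0) (hβρ 2) (hβρ 0) key.1)
  have hb3 : β 3 = S.ρ - β 0 :=
    eq_sub_of_add_eq (my_sum_eq_rho (hββ 3) (hββ 0) (hβρ 3) (hβρ 0) key.2)
  exact ⟨Equiv.refl _, β 0, hβ 0, rfl, he.symm, hb2, hb3⟩
end Aux2

section Aux3
variable {ι V : Type*} [Fintype ι] [NormedAddCommGroup V] [InnerProductSpace ℝ V]

lemma B01 (S : BasedRootSystem ι V) (β : Fin 4 → V) (hβ : ∀ i, β i ∈ S.Ψ)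
    (hlong : ∀ i, S.IsLong (β i))
    (hht : ∀ i, S.pair (β i) S.ρ = 1)
    (hsum : β 0 + β 1 + β 2 + β 3 = (2 : ℝ) • S.ρ)
    (hdist : ∀ i j : Fin 4, i ≠ j → β i ≠ β j)
    (h01 : ⟪β 0, β 1⟫ = -(⟪S.ρ,S.ρ⟫/2)) : CaseB S β := by
  set R := ⟪S.ρ,S.ρ⟫ with hRdef
  have hR : 0 < R :=
    lt_of_le_of_ne real_inner_self_nonneg
      (fun h => S.ne_zero _ S.rho_mem (inner_self_eq_zero.mp h.symm))
  have hβρ : ∀ i, 2*⟪β i, S.ρ⟫ = R := by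
    intro i
    have h := hht i
    unfold BasedRootSystem.pair at h
    rw [div_eq_one_iff_eq (show ⟪S.ρ,S.ρ⟫ ≠ 0 from hR.ne')] at h
    linarith
  have hββ : ∀ i, ⟪β i, β i⟫ = R := fun i => hlong i
  have hd : ∀ i j : Fin 4, i ≠ j → ⟪β i, β j⟫ = -(R/2) ∨ ⟪β i, β j⟫ = 0 ∨ ⟪β i, β j⟫ = R/2 := by
    intro i j hij
    rcases pair_options S (hβ i) (hβ j) (hββ i) (hββ j) (hβρ i) (hβρ j) with h|h|h|h
    · exact Or.inl h
    · exact Or.inr (Or.inl h)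
    · exact Or.inr (Or.inr h)
    · exact absurd h (hdist i j hij)
  have hrow : ∀ v : V, ⟪β 0, v⟫ + ⟪β 1, v⟫ + ⟪β 2, v⟫ + ⟪β 3, v⟫ = 2*⟪S.ρ, v⟫ := by
    intro v
    have h := congrArg (fun w => (inner ℝ w v : ℝ)) hsum
    simpa [inner_add_left, real_inner_smul_left] using h
  have h01sum : β 0 + β 1 = S.ρ := my_sum_eq_rho (hββ 0) (hββ 1) (hβρ 0) (hβρ 1) h01
  have h23sum : β 2 + β 3 = S.ρ := by
    have h : (β 0 + β 1) + (β 2 + β 3) = S.ρ + S.ρ := by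
      rw [← two_smul ℝ S.ρ, ← hsum]; abel
    rw [h01sum] at h
    exact add_left_cancel h
  have hb1 : β 1 = S.ρ - β 0 := eq_sub_of_add_eq (by rw [add_comm]; exact h01sum)
  have hb3 : β 3 = S.ρ - β 2 := eq_sub_of_add_eq (by rw [add_comm]; exact h23sum)
  have hb2 : β 2 = S.ρ - β 3 := eq_sub_of_add_eq h23sum
  have row := hrow (β 0)
  have h10 : ⟪β 1, β 0⟫ = -(R/2) := by rw [real_inner_comm]; exact h01
  have hρ0 : ⟪S.ρ, β 0⟫ = R/2 := by rw [real_inner_comm]; linarith [hβρ 0]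
  have h00 := hββ 0
  rcases hd 2 0 (by decide) with h2|h2|h2 <;> rcases hd 3 0 (by decide) with h3|h3|h3 <;>
    first
      | (exfalso; linarith)
      | exact ⟨Equiv.refl _, β 0, hβ 0, β 2, hβ 2, hdist 0 2 (by decide),
          (by rw [real_inner_comm]; exact h2), rfl, hb1, rfl, hb3⟩
      | exact ⟨Equiv.swap 2 3, β 0, hβ 0, β 3, hβ 3, hdist 0 3 (by decide),
          (by rw [real_inner_comm]; exact h3),
          (by rw [show (Equiv.swap (2:Fin 4) 3) 0 = 0 by decide]),
          (by rw [show (Equiv.swap (2:Fin 4) 3) 1 = 1 by decide]; exact hb1),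
          (by rw [show (Equiv.swap (2:Fin 4) 3) 2 = 3 by decide]),
          (by rw [show (Equiv.swap (2:Fin 4) 3) 3 = 2 by decide]; exact hb2)⟩
end Aux3

/-- If four long roots of α-height 1 sum to 2ρ then exactly one of cases
(a), (b), (c) holds. -/
theorem stmt6 (S : BasedRootSystem ι V) (β : Fin 4 → V) (hβ : ∀ i, β i ∈ S.Ψ)
    (hlong : ∀ i, S.IsLong (β i))
    (hht : ∀ i, S.pair (β i) S.ρ = 1)
    (hsum : β 0 + β 1 + β 2 + β 3 = (2 : ℝ) • S.ρ) :
    (CaseA S β ∧ ¬ CaseB S β ∧ ¬ CaseC S β) ∨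
    (¬ CaseA S β ∧ CaseB S β ∧ ¬ CaseC S β) ∨
    (¬ CaseA S β ∧ ¬ CaseB S β ∧ CaseC S β) := by
  classical
  set R := ⟪S.ρ,S.ρ⟫ with hRdef
  have hR : 0 < R :=
    lt_of_le_of_ne real_inner_self_nonneg
      (fun h => S.ne_zero _ S.rho_mem (inner_self_eq_zero.mp h.symm))
  have hβρ : ∀ i, 2*⟪β i, S.ρ⟫ = R := by
    intro i
    have h := hht i
    unfold BasedRootSystem.pair at h
    rw [div_eq_one_iff_eq (show ⟪S.ρ,S.ρ⟫ ≠ 0 from hR.ne')] at h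
    linarith
  have hββ : ∀ i, ⟪β i, β i⟫ = R := fun i => hlong i
  have hrow : ∀ v : V, ⟪β 0, v⟫ + ⟪β 1, v⟫ + ⟪β 2, v⟫ + ⟪β 3, v⟫ = 2*⟪S.ρ, v⟫ := by
    intro v
    have h := congrArg (fun w => (inner ℝ w v : ℝ)) hsum
    simpa [inner_add_left, real_inner_smul_left] using h
  -- exclusivity: A and C contradict
  have LAC : CaseA S β → CaseC S β → False := by
    rintro ⟨σ, γ, hγ, a0, a1, -, -⟩ hC
    have h := hC (σ 0) (σ 1) (σ.injective.ne (by decide))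
    rw [a0, a1] at h
    exact S.ne_zero γ hγ (inner_self_eq_zero.mp h)
  -- exclusivity: B and C contradict
  have LBC : CaseB S β → CaseC S β → False := by
    rintro ⟨σ, γ, hγ, δ, hδ, hne, horth, b0, b1, -, -⟩ hC
    have h := hC (σ 0) (σ 1) (σ.injective.ne (by decide))
    rw [b0, b1, inner_sub_right] at h
    have h1 : 2*⟪γ, S.ρ⟫ = R := by rw [← b0]; exact hβρ (σ 0)
    have h2 : ⟪γ, γ⟫ = R := by rw [← b0]; exact hββ (σ 0)
    linarith
  -- exclusivity: A and B contradict
  have LAB : CaseA S β → CaseB S β → False := by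
    rintro ⟨σ, γ, hγ, a0, a1, -, -⟩ ⟨τ, δ₁, hδ₁, δ₂, hδ₂, hne, horth, b0, b1, b2, b3⟩
    have f1ρ : 2*⟪δ₁, S.ρ⟫ = R := by rw [← b0]; exact hβρ (τ 0)
    have f1s : ⟪δ₁, δ₁⟫ = R := by rw [← b0]; exact hββ (τ 0)
    have f2ρ : 2*⟪δ₂, S.ρ⟫ = R := by rw [← b2]; exact hβρ (τ 2)
    have f2s : ⟪δ₂, δ₂⟫ = R := by rw [← b2]; exact hββ (τ 2)
    have half : ∀ d, d ∈ S.Ψ → d = S.ρ - d → False := by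
      intro d hd' hself
      have hdd : d + d = S.ρ := by nth_rewrite 2 [hself]; abel
      have hhalf : (1/2 : ℝ) • S.ρ = d := by
        rw [← hdd, smul_add, ← add_smul]
        norm_num
      rcases S.reduced S.ρ S.rho_mem (1/2) (hhalf ▸ hd') with h|h <;> norm_num at h
    have orth12 : δ₁ = S.ρ - δ₂ → False := by
      intro h
      rw [h, inner_sub_left] at horth
      have : ⟪S.ρ, δ₂⟫ = R/2 := by rw [real_inner_comm]; linarith
      linarith
    have orth21 : S.ρ - δ₁ = δ₂ → False := by
      intro h
      rw [← h, inner_sub_right] at horth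
      linarith
    obtain ⟨p, hp⟩ : ∃ p : Fin 4, p = τ.symm (σ 0) := ⟨_, rfl⟩
    obtain ⟨q, hq⟩ : ∃ q : Fin 4, q = τ.symm (σ 1) := ⟨_, rfl⟩
    have hpq : p ≠ q := by
      rw [hp, hq]
      intro h
      exact absurd (τ.symm.injective h) (σ.injective.ne (by decide))
    have gp : β (τ p) = γ := by rw [hp, Equiv.apply_symm_apply]; exact a0
    have gq : β (τ q) = γ := by rw [hq, Equiv.apply_symm_apply]; exact a1
    clear hp hq
    have hpv : p = 0 ∨ p = 1 ∨ p = 2 ∨ p = 3 := by omega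
    have hqv : q = 0 ∨ q = 1 ∨ q = 2 ∨ q = 3 := by omega
    rcases hpv with rfl|rfl|rfl|rfl <;> rcases hqv with rfl|rfl|rfl|rfl
    · exact hpq rfl
    · exact half δ₁ hδ₁ (by rw [← b1, ← b0, gp, gq])
    · exact hne (by rw [← b0, ← b2, gp, gq])
    · exact orth12 (by rw [← b3, ← b0, gp, gq])
    · exact half δ₁ hδ₁ (by rw [← b1, ← b0, gq, gp])
    · exact hpq rfl
    · exact orth21 (by rw [← b1, ← b2, gp, gq])
    · exact hne (sub_right_inj.mp (by rw [← b1, ← b3, gp, gq]))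
    · exact hne (by rw [← b0, ← b2, gq, gp])
    · exact orth21 (by rw [← b1, ← b2, gq, gp])
    · exact hpq rfl
    · exact half δ₂ hδ₂ (by rw [← b3, ← b2, gp, gq])
    · exact orth12 (by rw [← b3, ← b0, gq, gp])
    · exact hne (sub_right_inj.mp (by rw [← b1, ← b3, gq, gp]))
    · exact half δ₂ hδ₂ (by rw [← b3, ← b2, gq, gp])
    · exact hpq rfl
  -- existence
  have hex : CaseA S β ∨ CaseB S β ∨ CaseC S β := by
    by_cases hEq : ∃ i j : Fin 4, i ≠ j ∧ β i = β j
    · obtain ⟨i, j, hij, he⟩ := hEq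
      obtain ⟨τ, t0, t1⟩ := my_exists_perm i j hij
      left
      refine caseA_comp S β τ (A01 S (β ∘ τ) (fun m => hβ _) (fun m => hlong _)
        (fun m => hht _) (my_sum_comp β S.ρ hsum τ) ?_)
      show β (τ 0) = β (τ 1)
      rw [t0, t1]; exact he
    · push_neg at hEq
      by_cases hNeg : ∃ i j : Fin 4, i ≠ j ∧ ⟪β i, β j⟫ = -(R/2)
      · obtain ⟨i, j, hij, he⟩ := hNeg
        obtain ⟨τ, t0, t1⟩ := my_exists_perm i j hij
        right; left
        refine caseB_comp S β τ (B01 S (β ∘ τ) (fun m => hβ _) (fun m => hlong _)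
          (fun m => hht _) (my_sum_comp β S.ρ hsum τ)
          (fun p q hpq h => hEq (τ p) (τ q) (τ.injective.ne hpq) h) ?_)
        show ⟪β (τ 0), β (τ 1)⟫ = -(⟪S.ρ,S.ρ⟫/2)
        rw [t0, t1]; exact he
      · push_neg at hNeg
        right; right
        have nn : ∀ i j : Fin 4, i ≠ j → 0 ≤ ⟪β i, β j⟫ := by
          intro i j hij
          rcases pair_options S (hβ i) (hβ j) (hββ i) (hββ j) (hβρ i) (hβρ j) with h|h|h|h
          · exact absurd h (hNeg i j hij)
          · rw [h]
          · rw [h]; linarith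
          · exact absurd h (hEq i j hij)
        have hρβ : ∀ k, ⟪S.ρ, β k⟫ = R/2 := by
          intro k; rw [real_inner_comm]; linarith [hβρ k]
        have hv : ∀ m : Fin 4, m = 0 ∨ m = 1 ∨ m = 2 ∨ m = 3 := by omega
        intro i j hij
        rcases hv i with rfl|rfl|rfl|rfl <;> rcases hv j with rfl|rfl|rfl|rfl <;>
          first
          | (exfalso; exact hij rfl)
          | linarith [nn 0 1 (by decide), nn 0 2 (by decide), nn 0 3 (by decide),
              nn 1 0 (by decide), nn 1 2 (by decide), nn 1 3 (by decide),
              nn 2 0 (by decide), nn 2 1 (by decide), nn 2 3 (by decide),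
              nn 3 0 (by decide), nn 3 1 (by decide), nn 3 2 (by decide),
              hrow (β 0), hrow (β 1), hrow (β 2), hrow (β 3),
              hββ 0, hββ 1, hββ 2, hββ 3, hρβ 0, hρβ 1, hρβ 2, hρβ 3]
  rcases hex with hA | hB | hC
  · exact Or.inl ⟨hA, fun hB => LAB hA hB, fun hC => LAC hA hC⟩
  · exact Or.inr (Or.inl ⟨fun hA => LAB hA hB, hB, fun hC => LBC hB hC⟩)
  · exact Or.inr (Or.inr ⟨fun hA => LAC hA hC, fun hB => LBC hB hC, hC⟩)

end
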